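/- Define Z̃_{-1}(x) = 0, Z̃_0(x) = 1, and Z̃_k(x) = 2 Re(x) Z̃_{k-1}(x) − |x|² Z̃_{k-2}(x) for k ≥ 1, functions ℍ → ℝ. Then each Z̃_k is a harmonic polynomial function of the four real coordinates x₀, x₁, x₂, x₃ of x (i.e., Δ Z̃_k = 0 where Δ = ∂²/∂x₀² + ∂²/∂x₁² + ∂²/∂x₂² + ∂²/∂x₃²). -/

import Mathlib

open MvPolynomial
open scoped Quaternion RealInnerProductSpace

/-- `zonal (k+1) = Z̃_k`: the normalized zonal harmonics with pole `1`, with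
`zonal 0 = Z̃_{-1} = 0`, `zonal 1 = Z̃_0 = 1`, and the recurrence
`Z̃_k(x) = 2 Re(x) Z̃_{k-1}(x) − |x|² Z̃_{k-2}(x)`. -/
noncomputable def zonal : ℕ → Quaternion ℝ → ℝ
  | 0, _ => 0
  | 1, _ => 1
  | (k + 2), x => 2 * x.re * zonal (k + 1) x - ‖x‖ ^ 2 * zonal k x

/-- The Laplacian of `f : ℍ → ℝ` in the four real coordinates: the sum of the pure
second derivatives in the directions `1, i, j, k`. -/
noncomputable def quatLaplacian (f : Quaternion ℝ → ℝ) (x : Quaternion ℝ) : ℝ :=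
  iteratedFDeriv ℝ 2 f x ![1, 1] +
  iteratedFDeriv ℝ 2 f x ![⟨0,1,0,0⟩, ⟨0,1,0,0⟩] +
  iteratedFDeriv ℝ 2 f x ![⟨0,0,1,0⟩, ⟨0,0,1,0⟩] +
  iteratedFDeriv ℝ 2 f x ![⟨0,0,0,1⟩, ⟨0,0,0,1⟩]

/-! ### The algebraic part.

We model `Z̃` as two-variable polynomials in `a = Re x` and `n = ‖x‖²`, and show that
the differential operator corresponding to the Laplacian annihilates them. -/

/-- The polynomial model of `zonal`. -/
noncomputable def zP : ℕ → MvPolynomial (Fin 2) ℝ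
  | 0 => 0
  | 1 => 1
  | (k + 2) => 2 * X 0 * zP (k + 1) - X 1 * zP k

/-- First-order operator `D`. -/
noncomputable def Dop (p : MvPolynomial (Fin 2) ℝ) : MvPolynomial (Fin 2) ℝ :=
  pderiv 0 p + 2 * X 0 * pderiv 1 p

/-- First-order operator `E`. -/
noncomputable def Eop (p : MvPolynomial (Fin 2) ℝ) : MvPolynomial (Fin 2) ℝ :=
  X 0 * pderiv 0 p + 2 * X 1 * pderiv 1 p + 2 * p

/-- The polynomial Laplacian: if `f(x) = p(Re x, ‖x‖²)` then `Δf = (Lop p)(Re x, ‖x‖²)`. -/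
noncomputable def Lop (p : MvPolynomial (Fin 2) ℝ) : MvPolynomial (Fin 2) ℝ :=
  pderiv 0 (pderiv 0 p) + 2 * X 0 * (pderiv 1 (pderiv 0 p) + pderiv 0 (pderiv 1 p))
    + 4 * X 1 * pderiv 1 (pderiv 1 p) + 8 * pderiv 1 p

lemma pderiv_two (i : Fin 2) : pderiv i (2 : MvPolynomial (Fin 2) ℝ) = 0 := by
  rw [← map_ofNat (C : ℝ →+* MvPolynomial (Fin 2) ℝ) 2, pderiv_C]

lemma zP_hD : ∀ k : ℕ, Dop (zP (k + 1)) = Eop (zP k)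
  | 0 => by simp [zP, Dop, Eop]
  | 1 => by
      simp [zP, Dop, Eop, pderiv_mul, pderiv_two, pderiv_one, pderiv_X_self,
        pderiv_X_of_ne (show (1:Fin 2) ≠ 0 by decide),
        pderiv_X_of_ne (show (0:Fin 2) ≠ 1 by decide)]
  | (k + 2) => by
      have h1 := zP_hD (k + 1)
      have h0 := zP_hD k
      simp only [zP, Dop, Eop, map_sub, map_add, map_zero, pderiv_mul, pderiv_two, pderiv_one,
        pderiv_X_self, pderiv_X_of_ne (show (1:Fin 2) ≠ 0 by decide),
        pderiv_X_of_ne (show (0:Fin 2) ≠ 1 by decide)] at h1 h0 ⊢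
      linear_combination (2 * X 0 : MvPolynomial (Fin 2) ℝ) * h1 - (X 1 : MvPolynomial (Fin 2) ℝ) * h0

lemma zP_hL : ∀ k : ℕ, Lop (zP k) = 0
  | 0 => by simp [zP, Lop]
  | 1 => by simp [zP, Lop]
  | (k + 2) => by
      have h1 := zP_hL (k + 1)
      have h0 := zP_hL k
      have hd := zP_hD k
      simp only [zP, Dop, Eop, Lop, map_sub, map_add, map_zero, pderiv_mul, pderiv_two,
        pderiv_one, pderiv_X_self, pderiv_X_of_ne (show (1:Fin 2) ≠ 0 by decide),
        pderiv_X_of_ne (show (0:Fin 2) ≠ 1 by decide)] at h1 h0 hd ⊢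
      linear_combination (2 * X 0 : MvPolynomial (Fin 2) ℝ) * h1 - (X 1 : MvPolynomial (Fin 2) ℝ) * h0 + (4 : MvPolynomial (Fin 2) ℝ) * hd

/-! ### The analytic part. -/

/-- The coordinates `(Re x, ‖x‖²)`. -/
noncomputable def co (x : ℍ) : Fin 2 → ℝ := ![x.re, ‖x‖ ^ 2]

/-- The gradient (as a continuous linear map) of `x ↦ eval (co x) p`. -/
noncomputable def gradCLM (p : MvPolynomial (Fin 2) ℝ) (x : ℍ) : ℍ →L[ℝ] ℝ :=
  eval (co x) (pderiv 0 p) • innerSL ℝ (1 : ℍ) +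
    eval (co x) (pderiv 1 p) • ((2 : ℝ) • innerSL ℝ x)

lemma inner_one_left (y : ℍ) : ⟪(1 : ℍ), y⟫ = y.re := by
  simp [Quaternion.inner_def, Quaternion.re_mul]

lemma gradCLM_apply (p : MvPolynomial (Fin 2) ℝ) (x v : ℍ) :
    gradCLM p x v = eval (co x) (pderiv 0 p) * v.re
      + eval (co x) (pderiv 1 p) * (2 * ⟪x, v⟫) := by
  simp [gradCLM, inner_one_left]

lemma hasFDerivAt_re (x : ℍ) :
    HasFDerivAt (fun y : ℍ => y.re) (innerSL ℝ (1 : ℍ)) x := by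
  have h := (innerSL ℝ (1 : ℍ)).hasFDerivAt (x := x)
  refine h.congr_of_eventuallyEq (Filter.Eventually.of_forall fun y => ?_)
  simp [inner_one_left]

lemma hasFDerivAt_co1 (x : ℍ) :
    HasFDerivAt (fun y : ℍ => ‖y‖ ^ 2) ((2 : ℝ) • innerSL ℝ x) x := by
  have h := (hasStrictFDerivAt_norm_sq x).hasFDerivAt
  refine h.congr_fderiv ?_
  ext v
  simp [two_smul]

lemma hasFDerivAt_eval (p : MvPolynomial (Fin 2) ℝ) (x : ℍ) :
    HasFDerivAt (fun y : ℍ => eval (co y) p) (gradCLM p x) x := by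
  induction p using MvPolynomial.induction_on with
  | C a =>
      have : (fun y : ℍ => eval (co y) (C a)) = fun _ => a := by
        funext y; simp
      rw [this]
      have h0 : gradCLM (C a) x = 0 := by
        simp [gradCLM]
      rw [h0]
      exact hasFDerivAt_const _ _
  | add p q hp hq =>
      have : gradCLM (p + q) x = gradCLM p x + gradCLM q x := by
        simp only [gradCLM, map_add, eval_add, add_smul]
        abel
      have h := hp.add hq
      rw [this]
      refine h.congr_of_eventuallyEq (Filter.Eventually.of_forall fun y => ?_)
      simp
  | mul_X p i hp =>
      rcases (by decide : ∀ j : Fin 2, j = 0 ∨ j = 1) i with rfl | rfl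
      · have h := hp.mul (hasFDerivAt_re x)
        have : (fun y : ℍ => eval (co y) (p * X 0)) = fun y => eval (co y) p * y.re := by
          funext y; simp [co]
        rw [this]
        refine h.congr_fderiv ?_
        ext v
        simp only [gradCLM_apply, ContinuousLinearMap.add_apply, ContinuousLinearMap.smul_apply,
          innerSL_apply_apply, smul_eq_mul, pderiv_mul, pderiv_X_self,
          pderiv_X_of_ne (show (0:Fin 2) ≠ 1 by decide), map_add, eval_add, eval_mul, eval_X,
          mul_one, mul_zero, add_zero, eval_zero]
        simp [co, inner_one_left]
        ring
      · have h := hp.mul (hasFDerivAt_co1 x)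
        have : (fun y : ℍ => eval (co y) (p * X 1)) = fun y => eval (co y) p * ‖y‖ ^ 2 := by
          funext y; simp [co]
        rw [this]
        refine h.congr_fderiv ?_
        ext v
        simp only [gradCLM_apply, ContinuousLinearMap.add_apply, ContinuousLinearMap.smul_apply,
          innerSL_apply_apply, smul_eq_mul, pderiv_mul, pderiv_X_self,
          pderiv_X_of_ne (show (1:Fin 2) ≠ 0 by decide), map_add, eval_add, eval_mul, eval_X,
          mul_one, mul_zero, add_zero, eval_zero]
        simp [co, inner_one_left]
        ring

lemma contDiff_eval (p : MvPolynomial (Fin 2) ℝ) :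
    ContDiff ℝ ⊤ (fun y : ℍ => eval (co y) p) := by
  induction p using MvPolynomial.induction_on with
  | C a =>
      have : (fun y : ℍ => eval (co y) (C a)) = fun _ => a := by funext y; simp
      rw [this]; exact contDiff_const
  | add p q hp hq =>
      have : (fun y : ℍ => eval (co y) (p + q))
          = fun y => eval (co y) p + eval (co y) q := by funext y; simp
      rw [this]; exact hp.add hq
  | mul_X p i hp =>
      rcases (by decide : ∀ j : Fin 2, j = 0 ∨ j = 1) i with rfl | rfl
      · have : (fun y : ℍ => eval (co y) (p * X 0)) = fun y => eval (co y) p * y.re := by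
          funext y; simp [co]
        rw [this]
        refine hp.mul ?_
        have he : (QuaternionAlgebra.re : ℍ → ℝ) = fun y => innerSL ℝ (1 : ℍ) y :=
          funext fun y => (inner_one_left y).symm
        rw [he]
        exact (innerSL ℝ (1 : ℍ)).contDiff
      · have : (fun y : ℍ => eval (co y) (p * X 1)) = fun y => eval (co y) p * ‖y‖ ^ 2 := by
          funext y; simp [co]
        rw [this]
        exact hp.mul (contDiff_norm_sq ℝ)

lemma d2 (p : MvPolynomial (Fin 2) ℝ) (x v : ℍ) :
    iteratedFDeriv ℝ 2 (fun y => eval (co y) p) x ![v, v] =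
      eval (co x) (pderiv 0 (pderiv 0 p)) * (v.re * v.re)
      + eval (co x) (pderiv 1 (pderiv 0 p)) * (2 * ⟪x, v⟫ * v.re)
      + eval (co x) (pderiv 0 (pderiv 1 p)) * (v.re * (2 * ⟪x, v⟫))
      + eval (co x) (pderiv 1 (pderiv 1 p)) * ((2 * ⟪x, v⟫) * (2 * ⟪x, v⟫))
      + eval (co x) (pderiv 1 p) * (2 * ⟪v, v⟫) := by
  have hdiff : DifferentiableAt ℝ (fderiv ℝ (fun y : ℍ => eval (co y) p)) x := by
    have h := (contDiff_eval p).fderiv_right (m := ⊤) le_top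
    exact (h.differentiable (by simp)).differentiableAt
  rw [iteratedFDeriv_two_apply]
  simp only [Matrix.cons_val_zero, Matrix.cons_val_one, Matrix.head_cons]
  have h2 : fderiv ℝ (fderiv ℝ (fun y : ℍ => eval (co y) p)) x v v
      = fderiv ℝ (fun y => fderiv ℝ (fun y' : ℍ => eval (co y') p) y v) x v := by
    rw [fderiv_clm_apply hdiff (differentiableAt_const v)]
    simp
  rw [h2]
  have h3 : (fun y => fderiv ℝ (fun y' : ℍ => eval (co y') p) y v)
      = fun y => eval (co y) (pderiv 0 p) * v.re
          + eval (co y) (pderiv 1 p) * (2 * ⟪y, v⟫) := by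
    funext y
    rw [(hasFDerivAt_eval p y).fderiv, gradCLM_apply]
  rw [h3]
  have hip : HasFDerivAt (fun y : ℍ => 2 * ⟪y, v⟫)
      (((2 : ℝ) • innerSL ℝ v : ℍ →L[ℝ] ℝ)) x := by
    have h := ((2 : ℝ) • innerSL ℝ v : ℍ →L[ℝ] ℝ).hasFDerivAt (x := x)
    refine h.congr_of_eventuallyEq (Filter.Eventually.of_forall fun y => ?_)
    simp [real_inner_comm, smul_eq_mul]
  have h4 := ((hasFDerivAt_eval (pderiv 0 p) x).mul_const v.re).add
    ((hasFDerivAt_eval (pderiv 1 p) x).mul hip)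
  rw [HasFDerivAt.fderiv (f := fun y : ℍ => eval (co y) (pderiv 0 p) * v.re + eval (co y) (pderiv 1 p) * (2 * ⟪y, v⟫)) h4]
  simp only [ContinuousLinearMap.add_apply, ContinuousLinearMap.smul_apply, gradCLM_apply,
    innerSL_apply_apply, smul_eq_mul]
  ring

lemma zonal_eq : ∀ (k : ℕ) (x : ℍ), zonal k x = eval (co x) (zP k)
  | 0, x => by simp [zonal, zP]
  | 1, x => by simp [zonal, zP]
  | (k + 2), x => by
      have h1 := zonal_eq (k + 1) x
      have h0 := zonal_eq k x
      simp only [zonal, zP, eval_sub, eval_mul, eval_X, map_ofNat, co,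
        Matrix.cons_val_zero, Matrix.cons_val_one, Matrix.head_cons] at h1 h0 ⊢
      rw [h1, h0]

/-- Each `Z̃_k` is a harmonic function of the four real coordinates:
`Δ Z̃_k = 0` on all of `ℍ ≅ ℝ⁴`. -/
theorem zonal_harmonic (k : ℕ) (x : Quaternion ℝ) :
    quatLaplacian (zonal k) x = 0 := by
  have hz : zonal k = fun y => eval (co y) (zP k) := funext (zonal_eq k)
  have hL : eval (co x) (Lop (zP k)) = 0 := by rw [zP_hL k]; simp
  have hn : ‖x‖ ^ 2 = x.re ^ 2 + x.imI ^ 2 + x.imJ ^ 2 + x.imK ^ 2 := by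
    rw [sq, ← Quaternion.normSq_eq_norm_mul_self, Quaternion.normSq_def']
  simp only [Lop, eval_add, eval_mul, eval_X, map_ofNat, co, Matrix.cons_val_zero,
    Matrix.cons_val_one, Matrix.head_cons, hn] at hL
  rw [quatLaplacian, hz, d2, d2 (v := (⟨0,1,0,0⟩ : ℍ)), d2 (v := (⟨0,0,1,0⟩ : ℍ)), d2 (v := (⟨0,0,0,1⟩ : ℍ))]
  simp only [Quaternion.inner_def, Quaternion.inner_self, Quaternion.re_mul,
    Quaternion.re_star, Quaternion.imI_star, Quaternion.imJ_star, Quaternion.imK_star,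
    Quaternion.re_one, Quaternion.imI_one, Quaternion.imJ_one, Quaternion.imK_one,
    Quaternion.normSq_def', co, Matrix.cons_val_zero, Matrix.cons_val_one, Matrix.head_cons,
    hn]
  norm_num
  have e : ∀ a b : ℍ, ⟪a, b⟫ = a.re*b.re + a.imI*b.imI + a.imJ*b.imJ + a.imK*b.imK := fun a b => by simp [Quaternion.inner_def, Quaternion.re_mul]
  erw [e, e, e, e, e, e]
  norm_num
  linear_combination hL
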